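/- Let I be a compact interval and f : I → I be C² and nonsingular. Then every metric attractor of f that contains no critical points is a topologically attracting periodic orbit, assuming that for Lebesgue almost every x either ω(x) contains a critical point or ω(x) is a nonrepelling periodic orbit. -/

import Mathlib

open MeasureTheory Set Filter Metric

/-- The ω-limit set of a point under iteration of `f`. -/
def omegaLimitPt (f : ℝ → ℝ) (x : ℝ) : Set ℝ :=
  {y | ∃ φ : ℕ → ℕ, StrictMono φ ∧
    Filter.Tendsto (fun n => f^[φ n] x) Filter.atTop (nhds y)}

/-- The orbit of a periodic point `z`. -/
def periodicOrbit (f : ℝ → ℝ) (z : ℝ) : Set ℝ := {w | ∃ k : ℕ, f^[k] z = w}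

section aux
variable {p q : ℝ} {f : ℝ → ℝ}

lemma ck (hC2 : ContDiffOn ℝ 2 f (Set.Icc p q)) (hmaps : MapsTo f (Set.Icc p q) (Set.Icc p q))
    (k : ℕ) : ContDiffOn ℝ 2 (f^[k]) (Set.Icc p q) := by
  induction k with
  | zero => simpa using contDiffOn_id
  | succ n ih => rw [Function.iterate_succ]; exact ih.comp hC2 hmaps

lemma chainrule (hpq : p < q) (hC2 : ContDiffOn ℝ 2 f (Set.Icc p q))
    (hmaps : MapsTo f (Set.Icc p q) (Set.Icc p q)) (j k : ℕ) {x : ℝ} (hx : x ∈ Set.Icc p q) :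
    derivWithin (f^[j+k]) (Set.Icc p q) x
      = derivWithin (f^[j]) (Set.Icc p q) (f^[k] x) * derivWithin (f^[k]) (Set.Icc p q) x := by
  rw [Function.iterate_add f j k]
  exact derivWithin_comp x
    ((ck hC2 hmaps j).differentiableOn two_ne_zero _ (hmaps.iterate k hx))
    ((ck hC2 hmaps k).differentiableOn two_ne_zero x hx)
    (hmaps.iterate k)

lemma deriv_iter_ne {A : Set ℝ} (hpq : p < q) (hC2 : ContDiffOn ℝ 2 f (Set.Icc p q))
    (hmaps : MapsTo f (Set.Icc p q) (Set.Icc p q)) (hAsub : A ⊆ Set.Icc p q)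
    (hAinv : MapsTo f A A) (hnocrit : ∀ c ∈ A, derivWithin f (Set.Icc p q) c ≠ 0)
    (k : ℕ) {w : ℝ} (hw : w ∈ A) : derivWithin (f^[k]) (Set.Icc p q) w ≠ 0 := by
  induction k with
  | zero =>
      simp only [Function.iterate_zero]
      rw [derivWithin_id w _ ((uniqueDiffOn_Icc hpq) w (hAsub hw))]
      norm_num
  | succ n ih =>
      have h1 : (1:ℕ) + n = n + 1 := by omega
      have h2 := chainrule hpq hC2 hmaps 1 n (hAsub hw)
      rw [h1] at h2
      rw [h2]
      refine mul_ne_zero ?_ ih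
      have hmem : f^[n] w ∈ A := hAinv.iterate n hw
      simpa using hnocrit _ hmem

lemma omega_sub (hC2 : ContDiffOn ℝ 2 f (Set.Icc p q))
    (hmaps : MapsTo f (Set.Icc p q) (Set.Icc p q)) {M : ℕ} (hM : 0 < M) {u w : ℝ}
    (hu : u ∈ Set.Icc p q) (hw : w ∈ Set.Icc p q) {A : Set ℝ}
    (hworb : ∀ r : ℕ, f^[r] w ∈ A)
    (hconv : Tendsto (fun k => (f^[M])^[k] u) atTop (nhds w)) :
    omegaLimitPt f u ⊆ A := by
  rintro v ⟨φ, hφ, hten⟩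
  have hres : ∃ r, {j | φ j % M = r}.Infinite := by
    by_contra h
    push_neg at h
    have huniv : (Set.univ : Set ℕ) ⊆ ⋃ r ∈ Finset.range M, {j | φ j % M = r} := by
      intro j _
      simp only [Set.mem_iUnion, Set.mem_setOf_eq, Finset.mem_range]
      exact ⟨φ j % M, Nat.mod_lt _ hM, rfl⟩
    have hfin : (Set.univ : Set ℕ).Finite :=
      Set.Finite.subset (Set.Finite.biUnion (Finset.range M).finite_toSet
        (fun r _ => h r)) huniv
    exact Set.infinite_univ hfin
  obtain ⟨r, hS⟩ := hres
  set e := Nat.nth (fun j => φ j % M = r) with hedef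
  have he : StrictMono e := Nat.nth_strictMono hS
  have hem : ∀ j, φ (e j) % M = r := fun j => Nat.nth_mem_of_infinite hS j
  set Q := fun j => φ (e j) / M with hQdef
  have hQten : Tendsto Q atTop atTop := by
    rw [Filter.tendsto_atTop]
    intro b
    rw [eventually_atTop]
    refine ⟨M * b, fun j hj => ?_⟩
    have h1 : M * b ≤ φ (e j) := le_trans (le_trans hj he.le_apply) hφ.le_apply
    exact (Nat.le_div_iff_mul_le hM).mpr (by rwa [Nat.mul_comm b M])
  have hkey : ∀ j, f^[φ (e j)] u = f^[r] ((f^[M])^[Q j] u) := by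
    intro j
    conv_lhs => rw [← Nat.div_add_mod (φ (e j)) M]
    rw [hem j, (by omega : M * (φ (e j) / M) + r = r + M * (φ (e j) / M)),
      Function.iterate_add_apply, Function.iterate_mul]
  have h1 : Tendsto (fun j => f^[φ (e j)] u) atTop (nhds v) := hten.comp he.tendsto_atTop
  have h2' : Tendsto (fun j => (f^[M])^[Q j] u) atTop (nhdsWithin w (Set.Icc p q)) := by
    rw [tendsto_nhdsWithin_iff]
    refine ⟨hconv.comp hQten, Eventually.of_forall fun j => ?_⟩
    rw [← Function.iterate_mul]
    exact hmaps.iterate _ hu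
  have h3 : Tendsto (fun j => f^[r] ((f^[M])^[Q j] u)) atTop (nhds (f^[r] w)) :=
    ((ck hC2 hmaps r).continuousOn w hw).tendsto.comp h2'
  have hv : v = f^[r] w := tendsto_nhds_unique (by simpa only [hkey] using h1) h3
  rw [hv]; exact hworb r

lemma converge_aux (y : ℕ → ℝ) (C A : Set ℝ) (hC : IsCompact C) (hy : ∀ n, y n ∈ C)
    (hAfin : A.Finite)
    (hlp : ∀ a : ℝ, ∀ φ : ℕ → ℕ, StrictMono φ →
      Tendsto (fun j => y (φ j)) atTop (nhds a) → a ∈ A)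
    (hstep : Tendsto (fun n => y (n+1) - y n) atTop (nhds 0)) :
    ∃ w ∈ A, Tendsto y atTop (nhds w) := by
  classical
  obtain ⟨w, hwC, φ, hφ, hφten⟩ := hC.tendsto_subseq hy
  have hwA : w ∈ A := hlp w φ hφ hφten
  refine ⟨w, hwA, ?_⟩
  by_contra hnot
  rw [Metric.tendsto_atTop] at hnot
  push_neg at hnot
  obtain ⟨ε₀, hε₀, hfreq⟩ := hnot
  set S := A \ {w} with hSdef
  have hSfin : S.Finite := hAfin.diff
  obtain ⟨ρ, hρpos, hρle⟩ : ∃ ρ > 0, ∀ b ∈ S, ρ ≤ dist b w := by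
    rcases S.eq_empty_or_nonempty with hS | hS
    · exact ⟨1, one_pos, by rw [hS]; simp⟩
    · refine ⟨infDist w S, ?_, ?_⟩
      · exact (hSfin.isClosed.notMem_iff_infDist_pos hS).mp (by simp [hSdef])
      · intro b hb; rw [dist_comm]; exact infDist_le_dist_of_mem hb
  set ε := min ε₀ (ρ/2) with hε
  have hεpos : 0 < ε := lt_min hε₀ (by linarith)
  have hfreq2 : ∀ N : ℕ, ∃ n ≥ N, dist (y n) w < ε/2 := by
    intro N
    rw [Metric.tendsto_atTop] at hφten
    obtain ⟨J, hJ⟩ := hφten (ε/2) (by positivity)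
    exact ⟨φ (max J N), le_trans (le_max_right J N) hφ.le_apply, hJ _ (le_max_left _ _)⟩
  obtain ⟨N₀, hN₀⟩ : ∃ N₀ : ℕ, ∀ n ≥ N₀, |y (n+1) - y n| < ε/4 := by
    have h4 := (NormedAddCommGroup.tendsto_nhds_zero.mp hstep) (ε/4) (by positivity)
    simpa using eventually_atTop.mp h4
  have hann : ∀ N : ℕ, ∃ n ≥ N,
      y n ∈ C ∩ {t | ε/2 ≤ dist t w ∧ dist t w ≤ 3*ε/4} := by
    intro N
    obtain ⟨n₁, hn₁, hd₁⟩ := hfreq2 (max N N₀)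
    obtain ⟨n₂, hn₂, hd₂⟩ := hfreq (n₁ + 1)
    have hex : ∃ j : ℕ, ε/2 ≤ dist (y (n₁ + j)) w := by
      refine ⟨n₂ - n₁, ?_⟩
      rw [Nat.add_sub_cancel' (by omega)]
      calc ε/2 ≤ ε₀ := by
                  have h5 : ε ≤ ε₀ := min_le_left _ _
                  linarith
        _ ≤ dist (y n₂) w := hd₂
    set j₀ := Nat.find hex with hj₀def
    have hj₀ : ε/2 ≤ dist (y (n₁ + j₀)) w := Nat.find_spec hex
    have hj₀pos : j₀ ≠ 0 := by
      intro h
      rw [h] at hj₀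
      simp only [Nat.add_zero] at hj₀
      linarith
    have hprev : dist (y (n₁ + (j₀ - 1))) w < ε/2 :=
      lt_of_not_ge (Nat.find_min hex (by omega))
    have hstepb : |y (n₁ + j₀) - y (n₁ + (j₀ - 1))| < ε/4 := by
      have h := hN₀ (n₁ + (j₀ - 1)) (by omega)
      rwa [(by omega : n₁ + (j₀ - 1) + 1 = n₁ + j₀)] at h
    refine ⟨n₁ + j₀, by omega, hy _, hj₀, ?_⟩
    have htri : dist (y (n₁ + j₀)) w
        ≤ dist (y (n₁ + j₀)) (y (n₁ + (j₀ - 1))) + dist (y (n₁ + (j₀ - 1))) w :=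
      dist_triangle _ _ _
    simp only [Real.dist_eq] at htri hprev ⊢
    linarith
  have hfreq' : ∃ᶠ n in atTop,
      y n ∈ C ∩ {t | ε/2 ≤ dist t w ∧ dist t w ≤ 3*ε/4} := by
    rw [frequently_atTop]
    exact hann
  obtain ⟨ψ, hψ, hψmem⟩ := extraction_of_frequently_atTop hfreq'
  have hclosed : IsClosed {t : ℝ | ε/2 ≤ dist t w ∧ dist t w ≤ 3*ε/4} := by
    have heq : {t : ℝ | ε/2 ≤ dist t w ∧ dist t w ≤ 3*ε/4}
        = (fun t => dist t w) ⁻¹' (Set.Icc (ε/2) (3*ε/4)) := rfl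
    rw [heq]
    exact isClosed_Icc.preimage (continuous_id.dist continuous_const)
  obtain ⟨b, hbmem, ψ₂, hψ₂, hbten⟩ := (hC.inter_right hclosed).tendsto_subseq hψmem
  have hbA : b ∈ A := hlp b (ψ ∘ ψ₂) (hψ.comp hψ₂) hbten
  have hbne : b ≠ w := by
    intro h
    have h6 := hbmem.2.1
    rw [h] at h6
    simp at h6
    linarith
  have hge : ρ ≤ dist b w := hρle b ⟨hbA, hbne⟩
  have hle : dist b w ≤ 3*ε/4 := hbmem.2.2
  have h7 : ε ≤ ρ/2 := min_le_right _ _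
  linarith

lemma orbit_eq {z : ℝ} {m : ℕ} (hm : 0 < m) (hz : f^[m] z = z) :
    periodicOrbit f z = (fun j => f^[j] z) '' Set.Iio m := by
  ext w
  constructor
  · rintro ⟨j, rfl⟩
    refine ⟨j % m, Nat.mod_lt _ hm, ?_⟩
    conv_rhs => rw [← Nat.mod_add_div j m]
    rw [Function.iterate_add_apply, Function.iterate_mul, Function.iterate_fixed hz]
  · rintro ⟨j, _, rfl⟩; exact ⟨j, rfl⟩

lemma orbit_finite {z : ℝ} {m : ℕ} (hm : 0 < m) (hz : f^[m] z = z) :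
    (periodicOrbit f z).Finite := by
  rw [orbit_eq hm hz]
  exact (Set.finite_Iio m).image _

lemma stepF (hpq : p < q) (hC2 : ContDiffOn ℝ 2 f (Set.Icc p q))
    (hmaps : MapsTo f (Set.Icc p q) (Set.Icc p q))
    (hns : ∀ B : Set ℝ, MeasurableSet B → volume B = 0 →
      volume (Set.Icc p q ∩ f ⁻¹' B) = 0)
    {A : Set ℝ} (hAsub : A ⊆ Set.Icc p q) (hAc : IsCompact A) (hAinv : MapsTo f A A)
    (hAfin : A.Finite) {m : ℕ} (hm : 0 < m) (hfixA : ∀ w ∈ A, f^[m] w = w)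
    (hnocrit : ∀ c ∈ A, derivWithin f (Set.Icc p q) c ≠ 0)
    (hbasin : 0 < volume {x ∈ Set.Icc p q | omegaLimitPt f x ⊆ A}) :
    (interior {x ∈ Set.Icc p q | omegaLimitPt f x ⊆ A}).Nonempty := by
  classical
  set B := {x ∈ Set.Icc p q | omegaLimitPt f x ⊆ A} with hBdef
  set Nk : ℕ → Set ℝ := fun k => Set.Icc p q ∩ f^[k] ⁻¹' A with hNkdef
  have hNkclosed : ∀ k, IsClosed (Nk k) := fun k =>
    ContinuousOn.preimage_isClosed_of_isClosed (ck hC2 hmaps k).continuousOn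
      isClosed_Icc hAc.isClosed
  have hNknull : ∀ k, volume (Nk k) = 0 := by
    intro k
    induction k with
    | zero =>
        have hsub : Nk 0 ⊆ A := fun x hx => by simpa using hx.2
        exact measure_mono_null hsub (hAfin.measure_zero volume)
    | succ n ih =>
        have hsub : Nk (n+1) ⊆ Set.Icc p q ∩ f ⁻¹' (Nk n) := by
          rintro x ⟨hx, hfx⟩
          refine ⟨hx, hmaps hx, ?_⟩
          simpa [Function.iterate_succ_apply] using hfx
        exact measure_mono_null hsub (hns _ (hNkclosed n).measurableSet ih)
  obtain ⟨x₀, hx₀B, hx₀T⟩ : ∃ x₀, x₀ ∈ B ∧ x₀ ∉ ⋃ k, Nk k := by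
    by_contra hcon
    push_neg at hcon
    have hsub : B ⊆ ⋃ k, Nk k := fun x hx => hcon x hx
    have : volume B = 0 := measure_mono_null hsub (measure_iUnion_null hNknull)
    rw [this] at hbasin
    exact lt_irrefl _ hbasin
  have hx₀I : x₀ ∈ Set.Icc p q := hx₀B.1
  have hx₀ω : omegaLimitPt f x₀ ⊆ A := hx₀B.2
  have horbA : ∀ k, f^[k] x₀ ∉ A := fun k hk =>
    hx₀T (Set.mem_iUnion.mpr ⟨k, hx₀I, hk⟩)
  set M := 2 * m with hMdef
  have hMpos : 0 < M := by omega
  set y : ℕ → ℝ := fun n => (f^[M])^[n] x₀ with hydef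
  have hyeq : ∀ n, y n = f^[M * n] x₀ := fun n => by
    rw [hydef]; exact (congrFun (Function.iterate_mul f M n) x₀).symm
  have hyI : ∀ n, y n ∈ Set.Icc p q := fun n => by
    rw [hyeq]; exact hmaps.iterate _ hx₀I
  have hynA : ∀ n, y n ∉ A := fun n => by
    rw [hyeq]; exact horbA (M * n)
  have hfixA2 : ∀ w ∈ A, f^[M] w = w := by
    intro w hw
    rw [hMdef, two_mul, Function.iterate_add_apply, hfixA w hw, hfixA w hw]
  have hlp : ∀ a : ℝ, ∀ φ : ℕ → ℕ, StrictMono φ →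
      Tendsto (fun j => y (φ j)) atTop (nhds a) → a ∈ A := by
    intro a φ hφ hten
    apply hx₀ω
    refine ⟨fun j => M * φ j, ?_, ?_⟩
    · intro i j hij
      exact (Nat.mul_lt_mul_left hMpos).mpr (hφ hij)
    · have heq : (fun j => f^[M * φ j] x₀) = fun j => y (φ j) := by
        funext j; rw [hyeq]
      rw [heq]; exact hten
  have hstep : Tendsto (fun n => y (n+1) - y n) atTop (nhds 0) := by
    rw [NormedAddCommGroup.tendsto_nhds_zero]
    intro ε hε
    by_contra hcon
    rw [Filter.not_eventually] at hcon
    set K := Set.Icc p q ∩ (fun t => f^[M] t - t) ⁻¹' (Set.Ioo (-ε) ε)ᶜ with hKdef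
    have hKclosed : IsClosed K :=
      ContinuousOn.preimage_isClosed_of_isClosed
        ((ck hC2 hmaps M).continuousOn.sub continuousOn_id)
        isClosed_Icc (isOpen_Ioo.isClosed_compl)
    have hKc : IsCompact K :=
      isCompact_Icc.of_isClosed_subset hKclosed inter_subset_left
    have hfreqK : ∃ᶠ n in atTop, y n ∈ K := by
      apply hcon.mono
      intro n hn
      refine ⟨hyI n, ?_⟩
      have hstep1 : f^[M] (y n) - y n = y (n+1) - y n := by
        rw [hydef]
        simp [Function.iterate_succ_apply']
      simp only [Set.mem_preimage, Set.mem_compl_iff, Set.mem_Ioo, not_and_or, not_lt]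
      rw [hstep1]
      have habs : ε ≤ |y (n+1) - y n| := by
        rw [Real.norm_eq_abs] at hn; exact not_lt.mp hn
      rcases le_abs.mp habs with h | h
      · right; exact h
      · left; linarith
    obtain ⟨ψ, hψ, hψm⟩ := extraction_of_frequently_atTop hfreqK
    obtain ⟨b, hbK, ψ₂, hψ₂, hbten⟩ := hKc.tendsto_subseq hψm
    have hbA : b ∈ A := hlp b (ψ ∘ ψ₂) (hψ.comp hψ₂) hbten
    have hfix : f^[M] b - b = 0 := by rw [hfixA2 b hbA]; ring
    have hbK2 := hbK.2
    rw [Set.mem_preimage, hfix] at hbK2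
    exact hbK2 ⟨by linarith, by linarith⟩
  obtain ⟨w, hwA, hwten⟩ := converge_aux y (Set.Icc p q) A isCompact_Icc hyI hAfin hlp hstep
  have hwI : w ∈ Set.Icc p q := hAsub hwA
  set D := derivWithin (f^[m]) (Set.Icc p q) w with hDdef
  have hDne : D ≠ 0 := deriv_iter_ne hpq hC2 hmaps hAsub hAinv hnocrit m hwA
  have hhderiv : derivWithin (f^[M]) (Set.Icc p q) w = D * D := by
    rw [hMdef, two_mul, chainrule hpq hC2 hmaps m m hwI, hfixA w hwA]
  have hpos : 0 < derivWithin (f^[M]) (Set.Icc p q) w := by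
    rw [hhderiv]; exact mul_self_pos.mpr hDne
  have hcd : ContinuousOn (derivWithin (f^[M]) (Set.Icc p q)) (Set.Icc p q) :=
    (ck hC2 hmaps M).continuousOn_derivWithin (uniqueDiffOn_Icc hpq) (by norm_num)
  have hmem : {t | 0 < derivWithin (f^[M]) (Set.Icc p q) t}
      ∈ nhdsWithin w (Set.Icc p q) := (hcd w hwI) (isOpen_Ioi.mem_nhds hpos)
  obtain ⟨δ, hδpos, hδ⟩ := Metric.mem_nhdsWithin_iff.mp hmem
  set a0 := max p (w - δ/2) with ha0
  set b0 := min q (w + δ/2) with hb0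
  have haw : a0 ≤ w := max_le hwI.1 (by linarith)
  have hwb : w ≤ b0 := le_min hwI.2 (by linarith)
  have hJI : Set.Icc a0 b0 ⊆ Set.Icc p q :=
    Set.Icc_subset_Icc (le_max_left _ _) (min_le_left _ _)
  have hJball : ∀ t ∈ Set.Icc a0 b0, t ∈ ball w δ := by
    intro t ht
    have h1 : w - δ/2 ≤ t := le_trans (le_max_right p _) ht.1
    have h2 : t ≤ w + δ/2 := le_trans ht.2 (min_le_right q _)
    rw [mem_ball, Real.dist_eq, abs_sub_lt_iff]
    constructor <;> linarith
  have hmono : StrictMonoOn (f^[M]) (Set.Icc a0 b0) := by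
    apply strictMonoOn_of_deriv_pos (convex_Icc a0 b0)
      ((ck hC2 hmaps M).continuousOn.mono hJI)
    intro t ht
    rw [interior_Icc] at ht
    have htJ : t ∈ Set.Icc a0 b0 := Set.Ioo_subset_Icc_self ht
    have htI : t ∈ Set.Icc p q := hJI htJ
    have htpq1 : p < t := lt_of_le_of_lt (le_max_left p (w - δ/2)) ht.1
    have htpq2 : t < q := lt_of_lt_of_le ht.2 (min_le_left q (w + δ/2))
    rw [← derivWithin_of_mem_nhds (Icc_mem_nhds htpq1 htpq2)]
    exact hδ ⟨hJball t htJ, htI⟩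
  obtain ⟨N, hN⟩ : ∃ N, ∀ n ≥ N, y n ∈ Set.Icc a0 b0 := by
    rw [Metric.tendsto_atTop] at hwten
    obtain ⟨N, hN⟩ := hwten (δ/2) (by linarith)
    refine ⟨N, fun n hn => ?_⟩
    have hd := hN n hn
    rw [Real.dist_eq, abs_sub_lt_iff] at hd
    exact ⟨max_le (hyI n).1 (by linarith), le_min (hyI n).2 (by linarith)⟩
  have hwJ : w ∈ Set.Icc a0 b0 := ⟨haw, hwb⟩
  have hyNw : y N ≠ w := fun h => hynA N (h ▸ hwA)
  have hfixw : f^[M] w = w := hfixA2 w hwA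
  have hsucc : ∀ n, y (n+1) = f^[M] (y n) := fun n => by
    rw [hydef]; exact Function.iterate_succ_apply' _ _ _
  have hworb : ∀ r : ℕ, f^[r] w ∈ A := fun r => hAinv.iterate r hwA
  have hwten' : Tendsto (fun k => y (N + k)) atTop (nhds w) := by
    have hcomp := hwten.comp (tendsto_add_atTop_nat N)
    have heq : (fun k => y (N + k)) = (fun k => y (k + N)) := by
      funext k; rw [Nat.add_comm]
    rw [heq]; exact hcomp
  rcases lt_or_gt_of_ne hyNw with hlt | hgt
  · -- y N < w
    have hside : ∀ n, N ≤ n → y n < w := by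
      intro n hn
      induction n, hn using Nat.le_induction with
      | base => exact hlt
      | succ n hn ih =>
          calc y (n+1) = f^[M] (y n) := hsucc n
            _ < f^[M] w := hmono (hN n hn) hwJ ih
            _ = w := hfixw
    have htrap : ∀ u ∈ Set.Icc (y N) w, ∀ k,
        (f^[M])^[k] u ∈ Set.Icc (y (N+k)) w := by
      intro u hu k
      induction k with
      | zero => simpa using hu
      | succ k ih =>
          have hsub : Set.Icc (y (N+k)) w ⊆ Set.Icc a0 b0 :=
            Set.Icc_subset_Icc (hN (N+k) (by omega)).1 hwb
          have hmemJ : (f^[M])^[k] u ∈ Set.Icc a0 b0 := hsub ih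
          constructor
          · calc y (N+(k+1)) = f^[M] (y (N+k)) := by
                  rw [(by omega : N+(k+1) = (N+k)+1)]; exact hsucc (N+k)
              _ ≤ f^[M] ((f^[M])^[k] u) :=
                  hmono.monotoneOn (hN (N+k) (by omega)) hmemJ ih.1
              _ = (f^[M])^[k+1] u := (Function.iterate_succ_apply' _ _ _).symm
          · calc (f^[M])^[k+1] u = f^[M] ((f^[M])^[k] u) :=
                  Function.iterate_succ_apply' _ _ _
              _ ≤ f^[M] w := hmono.monotoneOn hmemJ hwJ ih.2
              _ = w := hfixw
    have hconv : ∀ u ∈ Set.Icc (y N) w,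
        Tendsto (fun k => (f^[M])^[k] u) atTop (nhds w) := by
      intro u hu
      apply tendsto_of_tendsto_of_tendsto_of_le_of_le hwten' tendsto_const_nhds
      · intro k; exact (htrap u hu k).1
      · intro k; exact (htrap u hu k).2
    have hBsub : Set.Icc (y N) w ⊆ B := by
      intro u hu
      have huI : u ∈ Set.Icc p q := Set.Icc_subset_Icc (hyI N).1 hwI.2 hu
      exact ⟨huI, omega_sub hC2 hmaps hMpos huI hwI hworb (hconv u hu)⟩
    refine ⟨(y N + w)/2, interior_mono hBsub ?_⟩
    rw [interior_Icc]
    exact ⟨by linarith, by linarith⟩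
  · -- w < y N
    have hside : ∀ n, N ≤ n → w < y n := by
      intro n hn
      induction n, hn using Nat.le_induction with
      | base => exact hgt
      | succ n hn ih =>
          calc w = f^[M] w := hfixw.symm
            _ < f^[M] (y n) := hmono hwJ (hN n hn) ih
            _ = y (n+1) := (hsucc n).symm
    have htrap : ∀ u ∈ Set.Icc w (y N), ∀ k,
        (f^[M])^[k] u ∈ Set.Icc w (y (N+k)) := by
      intro u hu k
      induction k with
      | zero => simpa using hu
      | succ k ih =>
          have hsub : Set.Icc w (y (N+k)) ⊆ Set.Icc a0 b0 :=
            Set.Icc_subset_Icc haw (hN (N+k) (by omega)).2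
          have hmemJ : (f^[M])^[k] u ∈ Set.Icc a0 b0 := hsub ih
          constructor
          · calc w = f^[M] w := hfixw.symm
              _ ≤ f^[M] ((f^[M])^[k] u) := hmono.monotoneOn hwJ hmemJ ih.1
              _ = (f^[M])^[k+1] u := (Function.iterate_succ_apply' _ _ _).symm
          · calc (f^[M])^[k+1] u = f^[M] ((f^[M])^[k] u) :=
                  Function.iterate_succ_apply' _ _ _
              _ ≤ f^[M] (y (N+k)) := hmono.monotoneOn hmemJ (hN (N+k) (by omega)) ih.2
              _ = y (N+(k+1)) := by
                  rw [(by omega : N+(k+1) = (N+k)+1)]; exact (hsucc (N+k)).symm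
    have hconv : ∀ u ∈ Set.Icc w (y N),
        Tendsto (fun k => (f^[M])^[k] u) atTop (nhds w) := by
      intro u hu
      apply tendsto_of_tendsto_of_tendsto_of_le_of_le tendsto_const_nhds hwten'
      · intro k; exact (htrap u hu k).1
      · intro k; exact (htrap u hu k).2
    have hBsub : Set.Icc w (y N) ⊆ B := by
      intro u hu
      have huI : u ∈ Set.Icc p q := Set.Icc_subset_Icc hwI.1 (hyI N).2 hu
      exact ⟨huI, omega_sub hC2 hmaps hMpos huI hwI hworb (hconv u hu)⟩
    refine ⟨(w + y N)/2, interior_mono hBsub ?_⟩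
    rw [interior_Icc]
    exact ⟨by linarith, by linarith⟩

end aux

/-- Let `f : I → I` be C² and nonsingular on a compact interval `I = [p,q]`.
Assume that for Lebesgue-a.e. `x`, either `ω(x)` contains a critical point or
`ω(x)` is a nonrepelling periodic orbit.  Then every metric attractor of `f`
containing no critical point is a topologically attracting periodic orbit. -/
theorem attractor_without_critical_points (p q : ℝ) (hpq : p < q) (f : ℝ → ℝ)
    (hC2 : ContDiffOn ℝ 2 f (Set.Icc p q))
    (hmaps : Set.MapsTo f (Set.Icc p q) (Set.Icc p q))
    -- nonsingularity
    (hns : ∀ B : Set ℝ, MeasurableSet B → volume B = 0 →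
      volume (Set.Icc p q ∩ f ⁻¹' B) = 0)
    -- almost every point: ω(x) contains a critical point or is a nonrepelling
    -- periodic orbit
    (hae : ∀ᵐ x ∂(volume.restrict (Set.Icc p q)),
      (∃ c ∈ omegaLimitPt f x, derivWithin f (Set.Icc p q) c = 0) ∨
      (∃ z : ℝ, ∃ m : ℕ, 0 < m ∧ f^[m] z = z ∧
        |derivWithin (f^[m]) (Set.Icc p q) z| ≤ 1 ∧
        omegaLimitPt f x = periodicOrbit f z))
    -- `A` is a metric attractor:
    (A : Set ℝ) (hAsub : A ⊆ Set.Icc p q) (hAc : IsCompact A)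
    (hAinv : Set.MapsTo f A A)
    (hbasin : 0 < volume {x ∈ Set.Icc p q | omegaLimitPt f x ⊆ A})
    (hmin : ∀ A' : Set ℝ, A' ⊆ A → A' ≠ A → IsCompact A' → Set.MapsTo f A' A' →
      volume {x ∈ Set.Icc p q | omegaLimitPt f x ⊆ A'} = 0)
    -- `A` contains no critical point:
    (hnocrit : ∀ c ∈ A, derivWithin f (Set.Icc p q) c ≠ 0) :
    ∃ z : ℝ, ∃ m : ℕ, 0 < m ∧ f^[m] z = z ∧ A = periodicOrbit f z ∧
      (interior {x ∈ Set.Icc p q | omegaLimitPt f x ⊆ A}).Nonempty := by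
  classical
  have hae0 := ae_iff.mp hae
  rw [Measure.restrict_apply' measurableSet_Icc] at hae0
  set B := {x ∈ Set.Icc p q | omegaLimitPt f x ⊆ A} with hBdef
  set C : ℕ → Set ℝ := fun k =>
    {x ∈ B | ∃ z : ℝ, f^[k+1] z = z ∧ omegaLimitPt f x = periodicOrbit f z} with hCdef
  have hcover : B ⊆ (⋃ k, C k) ∪
      ({x | ¬((∃ c ∈ omegaLimitPt f x, derivWithin f (Set.Icc p q) c = 0) ∨
        (∃ z : ℝ, ∃ m : ℕ, 0 < m ∧ f^[m] z = z ∧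
          |derivWithin (f^[m]) (Set.Icc p q) z| ≤ 1 ∧
          omegaLimitPt f x = periodicOrbit f z))} ∩ Set.Icc p q) := by
    intro x hx
    by_cases hg : (∃ c ∈ omegaLimitPt f x, derivWithin f (Set.Icc p q) c = 0) ∨
        (∃ z : ℝ, ∃ m : ℕ, 0 < m ∧ f^[m] z = z ∧
          |derivWithin (f^[m]) (Set.Icc p q) z| ≤ 1 ∧
          omegaLimitPt f x = periodicOrbit f z)
    · left
      rcases hg with ⟨c, hc, hcrit⟩ | ⟨z, m0, hm0, hz, _, hω⟩
      · exact absurd hcrit (hnocrit c (hx.2 hc))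
      · refine Set.mem_iUnion.mpr ⟨m0 - 1, hx, z, ?_, hω⟩
        rwa [show m0 - 1 + 1 = m0 by omega]
    · right; exact ⟨hg, hx.1⟩
  obtain ⟨k, hk⟩ : ∃ k, 0 < volume (C k) := by
    by_contra hall
    push_neg at hall
    have hnull : volume (⋃ k, C k) = 0 := by
      refine measure_iUnion_null fun k => ?_
      exact le_antisymm (hall k) zero_le
    have h1 := (measure_mono (μ := (volume : Measure ℝ)) hcover).trans (measure_union_le (μ := (volume : Measure ℝ)) _ _)
    rw [hnull, hae0] at h1
    simp only [add_zero, zero_add] at h1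
    exact absurd (lt_of_lt_of_le hbasin h1) (lt_irrefl _)
  set m := k + 1 with hmdef
  have hmpos : 0 < m := Nat.succ_pos k
  -- the set of fixed points of f^[m] in A
  set P := A ∩ (Set.Icc p q ∩ (fun z => f^[m] z - z) ⁻¹' ({0} : Set ℝ)) with hPdef
  have hPsub : P ⊆ A := inter_subset_left
  have hPmem : ∀ z, z ∈ P ↔ z ∈ A ∧ f^[m] z = z := by
    intro z
    constructor
    · rintro ⟨hzA, _, hz0⟩
      simp only [Set.mem_preimage, Set.mem_singleton_iff] at hz0
      exact ⟨hzA, by linarith [sub_eq_zero.mp hz0]⟩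
    · rintro ⟨hzA, hz⟩
      exact ⟨hzA, hAsub hzA, by simp only [Set.mem_preimage, Set.mem_singleton_iff, hz, sub_self]⟩
  have hPclosed : IsClosed P :=
    IsClosed.inter hAc.isClosed
      (ContinuousOn.preimage_isClosed_of_isClosed
        ((ck hC2 hmaps m).continuousOn.sub continuousOn_id)
        isClosed_Icc isClosed_singleton)
  have hPc : IsCompact P := hAc.of_isClosed_subset hPclosed hPsub
  have hPinv : MapsTo f P P := by
    intro z hz
    rw [hPmem] at hz ⊢
    refine ⟨hAinv hz.1, ?_⟩
    rw [← Function.iterate_succ_apply, Function.iterate_succ_apply', hz.2]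
  have hPA : P = A := by
    by_contra hne
    have h0 := hmin P hPsub hne hPc hPinv
    have hsub : C k ⊆ {x ∈ Set.Icc p q | omegaLimitPt f x ⊆ P} := by
      rintro x ⟨hxB, z, hzfix, hω⟩
      have hzω : z ∈ omegaLimitPt f x := by rw [hω]; exact ⟨0, rfl⟩
      have hzA : z ∈ A := hxB.2 hzω
      refine ⟨hxB.1, ?_⟩
      rw [hω]
      rintro w ⟨j, rfl⟩
      exact hPinv.iterate j ((hPmem z).mpr ⟨hzA, hzfix⟩)
    exact absurd (measure_mono_null hsub h0) hk.ne'
  have hfixA : ∀ w ∈ A, f^[m] w = w := fun w hw =>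
    ((hPmem w).mp (hPA.symm ▸ hw)).2
  by_cases hex : ∃ z ∈ A, A = periodicOrbit f z
  · obtain ⟨z, hzA, hAO⟩ := hex
    have hzfix : f^[m] z = z := hfixA z hzA
    have hAfin : A.Finite := by rw [hAO]; exact orbit_finite hmpos hzfix
    exact ⟨z, m, hmpos, hzfix, hAO,
      stepF hpq hC2 hmaps hns hAsub hAc hAinv hAfin hmpos hfixA hnocrit hbasin⟩
  · exfalso
    push_neg at hex
    set A' : ℚ × ℚ → Set ℝ := fun st =>
      A ∩ ⋂ j ∈ Finset.range m,
        (Set.Icc p q ∩ f^[j] ⁻¹' (Set.Ioo (st.1 : ℝ) (st.2 : ℝ))ᶜ) with hA'def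
    have hA'sub : ∀ st, A' st ⊆ A := fun st => inter_subset_left
    have hA'mem : ∀ st x, x ∈ A' st ↔
        x ∈ A ∧ ∀ j < m, f^[j] x ∉ Set.Ioo (st.1 : ℝ) (st.2 : ℝ) := by
      intro st x
      simp only [hA'def, Set.mem_inter_iff, Set.mem_iInter, Finset.mem_range,
        Set.mem_preimage, Set.mem_compl_iff]
      constructor
      · rintro ⟨hxA, h⟩
        exact ⟨hxA, fun j hj => (h j hj).2⟩
      · rintro ⟨hxA, h⟩
        exact ⟨hxA, fun j hj => ⟨hAsub hxA, h j hj⟩⟩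
    have hA'closed : ∀ st, IsClosed (A' st) := by
      intro st
      refine IsClosed.inter hAc.isClosed (isClosed_biInter fun j _ => ?_)
      exact ContinuousOn.preimage_isClosed_of_isClosed (ck hC2 hmaps j).continuousOn
        isClosed_Icc (isOpen_Ioo.isClosed_compl)
    have hA'c : ∀ st, IsCompact (A' st) := fun st =>
      hAc.of_isClosed_subset (hA'closed st) (hA'sub st)
    have hA'inv : ∀ st, MapsTo f (A' st) (A' st) := by
      intro st x hx
      rw [hA'mem] at hx ⊢
      refine ⟨hAinv hx.1, fun j hj hmem => ?_⟩
      have hmem2 : f^[j+1] x ∈ Set.Ioo (st.1:ℝ) (st.2:ℝ) := by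
        rw [Function.iterate_succ_apply]; exact hmem
      by_cases hjm : j + 1 < m
      · exact hx.2 (j+1) hjm hmem2
      · have hjm' : j + 1 = m := by omega
        rw [hjm', hfixA x hx.1] at hmem2
        exact hx.2 0 hmpos hmem2
    set T : ℚ × ℚ → Set ℝ := fun st =>
      if (A ∩ Set.Ioo (st.1 : ℝ) (st.2 : ℝ)).Nonempty then
        {x ∈ Set.Icc p q | omegaLimitPt f x ⊆ A' st} else ∅ with hTdef
    have hTnull : ∀ st, volume (T st) = 0 := by
      intro st
      simp only [hTdef]
      split_ifs with hne
      · refine hmin (A' st) (hA'sub st) ?_ (hA'c st) (hA'inv st)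
        obtain ⟨a, haA, haIoo⟩ := hne
        intro heq
        have haA' : a ∈ A' st := heq ▸ haA
        exact ((hA'mem st a).mp haA').2 0 hmpos (by simpa using haIoo)
      · simp
    have hcov : C k ⊆ ⋃ st : ℚ × ℚ, T st := by
      rintro x ⟨hxB, z, hzfix, hω⟩
      have hzω : z ∈ omegaLimitPt f x := by rw [hω]; exact ⟨0, rfl⟩
      have hzA : z ∈ A := hxB.2 hzω
      have horbsub : periodicOrbit f z ⊆ A := by rw [← hω]; exact hxB.2
      have hneq : A ≠ periodicOrbit f z := hex z hzA
      obtain ⟨d, hdA, hdO⟩ : ∃ d ∈ A, d ∉ periodicOrbit f z := by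
        by_contra hno
        push_neg at hno
        exact hneq (Set.Subset.antisymm hno horbsub)
      have hOfin : (periodicOrbit f z).Finite := orbit_finite hmpos hzfix
      obtain ⟨ρ, hρpos, hρle⟩ : ∃ ρ > 0, ∀ w ∈ periodicOrbit f z, ρ ≤ |w - d| := by
        refine ⟨infDist d (periodicOrbit f z), ?_, ?_⟩
        · exact (hOfin.isClosed.notMem_iff_infDist_pos ⟨z, 0, rfl⟩).mp hdO
        · intro w hw
          rw [← Real.dist_eq, dist_comm]
          exact infDist_le_dist_of_mem hw
      obtain ⟨s, hs1, hs2⟩ := exists_rat_btwn (show d - ρ < d by linarith)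
      obtain ⟨t, ht1, ht2⟩ := exists_rat_btwn (show d < d + ρ by linarith)
      refine Set.mem_iUnion.mpr ⟨(s, t), ?_⟩
      simp only [hTdef]
      have hdIoo : d ∈ Set.Ioo (s : ℝ) (t : ℝ) := ⟨hs2, ht1⟩
      rw [if_pos ⟨d, hdA, hdIoo⟩]
      refine ⟨hxB.1, ?_⟩
      rw [hω]
      rintro w hw
      rw [hA'mem]
      refine ⟨horbsub hw, fun j hj hmem => ?_⟩
      obtain ⟨i, rfl⟩ := hw
      have horb2 : f^[j] (f^[i] z) ∈ periodicOrbit f z :=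
        ⟨j + i, (Function.iterate_add_apply f j i z)⟩
      have hge := hρle _ horb2
      have h1 : (s : ℝ) < f^[j] (f^[i] z) := hmem.1
      have h2 : (f^[j] (f^[i] z) : ℝ) < t := hmem.2
      have habs : |f^[j] (f^[i] z) - d| < ρ := by
        rw [abs_sub_lt_iff]; constructor <;> linarith
      linarith
    exact hk.ne' (measure_mono_null hcov (measure_iUnion_null hTnull))
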